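/- Let X, Y be pointed metric spaces, u : ℝ≥0 → ℝ≥0 nondecreasing, and let f : X → Y satisfy, for some R₀, C > 0: |f(x)| ≤ max(|x|, R₀) for all x, and d(f(x), f(x')) ≥ C·d(x,x') − u(max(|x|, |x'|)) for all x, x'. Then for every n ≥ R₀, the cardinality b_Y(n) of the closed centered n-ball of Y satisfies b_Y(n) ≥ b_X(n) / b^u_X(u(n)/C), where b_X(n) is the cardinality of the closed centered n-ball of X and b^u_X(r) is the supremum of cardinalities of all closed r-balls in X. -/

import Mathlib

universe u

/-- Ball-counting inequality: `b_X(n) ≤ b_Y(n) · b^u_X(u(n)/C)` (the division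
form of `b_Y(n) ≥ b_X(n)/b^u_X(u(n)/C)`, stated multiplicatively so as to make
sense for arbitrary cardinals). -/
theorem stmt4 {X Y : Type u} [MetricSpace X] [MetricSpace Y] (x₀ : X) (y₀ : Y)
    (u : ℝ → ℝ) (hu : Monotone u) (hu0 : ∀ r, 0 ≤ u r)
    (f : X → Y) (R₀ C : ℝ) (hR₀ : 0 < R₀) (hC : 0 < C)
    (hrad : ∀ x, dist (f x) y₀ ≤ max (dist x x₀) R₀)
    (hexp : ∀ x x', C * dist x x' - u (max (dist x x₀) (dist x' x₀)) ≤ dist (f x) (f x'))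
    (n : ℝ) (hn : R₀ ≤ n) :
    Cardinal.mk (Metric.closedBall x₀ n) ≤
      Cardinal.mk (Metric.closedBall y₀ n) *
        ⨆ x : X, Cardinal.mk (Metric.closedBall x (u n / C)) := by
  set r := u n / C with hr
  set S := ⨆ x : X, Cardinal.mk (Metric.closedBall x r) with hS
  have hmap : ∀ x : Metric.closedBall x₀ n, f (x : X) ∈ Metric.closedBall y₀ n := by
    rintro ⟨x, hx⟩
    simp only [Metric.mem_closedBall] at hx ⊢
    exact (hrad x).trans (max_le hx hn)
  set g : Metric.closedBall x₀ n → Metric.closedBall y₀ n :=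
    fun x => ⟨f (x : X), hmap x⟩ with hg
  have hclose : ∀ x x' : Metric.closedBall x₀ n, g x = g x' →
      dist (x : X) (x' : X) ≤ r := by
    rintro ⟨x, hx⟩ ⟨x', hx'⟩ h
    simp only [hg, Subtype.mk.injEq] at h
    simp only [Metric.mem_closedBall] at hx hx'
    have h1 := hexp x x'
    rw [h, dist_self] at h1
    have h2 : u (max (dist x x₀) (dist x' x₀)) ≤ u n := hu (max_le hx hx')
    have : C * dist x x' ≤ u n := by linarith
    rw [hr, le_div_iff₀ hC]
    linarith [this]
  have fiberbound : ∀ y : Metric.closedBall y₀ n,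
      Cardinal.mk {x // g x = y} ≤ S := by
    intro y
    by_cases hne : Nonempty {x // g x = y}
    · obtain ⟨x₁⟩ := hne
      have : Cardinal.mk {x // g x = y} ≤
          Cardinal.mk (Metric.closedBall ((x₁ : Metric.closedBall x₀ n) : X) r) := by
        refine ⟨⟨fun x => ⟨((x : Metric.closedBall x₀ n) : X), ?_⟩, ?_⟩⟩
        · exact Metric.mem_closedBall.2
            (hclose _ _ (x.2.trans x₁.2.symm))
        · intro a b hab
          simp only [Subtype.mk.injEq] at hab
          exact Subtype.ext (Subtype.ext hab)
      exact this.trans (le_ciSup (Cardinal.bddAbove_range _) _)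
    · rw [Cardinal.mk_eq_zero_iff.2 (not_nonempty_iff.1 hne)]
      exact zero_le
  calc Cardinal.mk (Metric.closedBall x₀ n)
      = Cardinal.mk (Σ y : Metric.closedBall y₀ n, {x // g x = y}) :=
        (Cardinal.mk_congr (Equiv.sigmaFiberEquiv g)).symm
    _ = Cardinal.sum (fun y => Cardinal.mk {x // g x = y}) := Cardinal.mk_sigma _
    _ ≤ Cardinal.sum (fun _ : Metric.closedBall y₀ n => S) :=
        Cardinal.sum_le_sum _ _ fiberbound
    _ = Cardinal.mk (Metric.closedBall y₀ n) * S := Cardinal.sum_const' _ _
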